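/- There is no total recursive function h : ℕ → ℕ such that for every code e of a total recursive function f : ℕ → ℕ, h(e) is also a code of f and h is extensional (i.e., if e and e' code the same total function then h(e) = h(e')), unless equality of total recursive functions from codes is decidable; in particular, there is no partial recursive function that, given access only to the graph of a total recursive function f (as an oracle returning f(n) on query n, with only finitely many queries made), outputs a code for f. -/

import Mathlib

/-- The `e`-th partial recursive function under a fixed Gödel numbering. -/
def phi (e : ℕ) : ℕ →. ℕ := (Denumerable.ofNat Nat.Partrec.Code e).eval

/-- `e` realizes (is a code of) the total function `f`. -/
def Codes (e : ℕ) (f : ℕ → ℕ) : Prop := ∀ n, phi e n = Part.some (f n)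

/-- There is no total recursive, extensional `h` assigning to each code of a total
recursive function a code of the same function, unless equality of total recursive
functions from codes is decidable; and there is no continuous functional (depending
on only finitely many values of its input) producing codes of total recursive functions. -/
theorem stmt0 :
    (∀ h : ℕ → ℕ, Computable h →
      (∀ (e : ℕ) (f : ℕ → ℕ), Codes e f → Codes (h e) f) →
      (∀ (e e' : ℕ) (f : ℕ → ℕ), Codes e f → Codes e' f → h e = h e') →
      ∃ d : ℕ → ℕ → Bool, Computable₂ d ∧
        ∀ (e e' : ℕ) (f g : ℕ → ℕ), Codes e f → Codes e' g → (d e e' = true ↔ f = g)) ∧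
    ¬ ∃ F : (ℕ → ℕ) → ℕ,
        (∀ f : ℕ → ℕ, ∃ s : Finset ℕ, ∀ g : ℕ → ℕ, (∀ n ∈ s, g n = f n) → F g = F f) ∧
        (∀ f : ℕ → ℕ, Computable f → Codes (F f) f) := by
  constructor
  · intro h hc hcode hext
    refine ⟨fun e e' => decide (h e = h e'), ?_, ?_⟩
    · exact Primrec.eq.decide.to_comp.comp (hc.comp Computable.fst) (hc.comp Computable.snd)
    · intro e e' f g hf hg
      constructor
      · intro hd
        have heq : h e = h e' := of_decide_eq_true hd
        have h1 := hcode e f hf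
        have h2 := hcode e' g hg
        funext n
        have := (h1 n).symm.trans (heq ▸ h2 n)
        exact Part.some_injective this
      · intro hfg
        subst hfg
        exact decide_eq_true (hext e e' f hf hg)
  · rintro ⟨F, hcont, hcode⟩
    obtain ⟨s, hs⟩ := hcont (fun _ => 0)
    obtain ⟨m, hm⟩ := Infinite.exists_notMem_finset s
    set g : ℕ → ℕ := fun n => if n = m then 1 else 0 with hg
    have hgc : Computable g := by
      apply Primrec.to_comp
      exact Primrec.ite (Primrec.eq.comp Primrec.id (Primrec.const m))
        (Primrec.const 1) (Primrec.const 0)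
    have hFg : F g = F (fun _ => 0) := by
      apply hs
      intro n hn
      simp only [hg]
      rw [if_neg]
      rintro rfl; exact hm hn
    have h1 := hcode g hgc m
    have h2 := hcode (fun _ => 0) (Computable.const 0) m
    rw [hFg] at h1
    have := (h1.symm.trans h2)
    have h3 : g m = 0 := Part.some_injective this
    simp [hg] at h3
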